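/- With the same setup, for every user (l_j, j) with j ≠ k and every user π_k(l_k) of cell k: γ_j^[l_j] − α_jk^[l_j] ≥ r_k^[π_k(l_k)], where l_j = π_j(l_j') for some position l_j'. That is, the interference level γ of any user in another cell, reduced by the cross strength α_jk^[l_j], dominates every downlink power exponent in cell k. -/
import Mathlib


/-- The positive part `(max_{(l_j,j): j≠k} (α_{kj}^{[π_k(m)]} + r_j^{[l_j]}))⁺` of the
maximal other-cell interference received by user `π_k(m)` of cell `k` (an empty maximum
is `-∞`, so its positive part is `0`), minus `α_{kk}^{[π_k(m)]}`.
Here `α k l i = α_{ki}^{[l]}` and `r j l` is the downlink power exponent of user `l` of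
cell `j`. -/
noncomputable def interfTerm (K : ℕ) (L : Fin K → ℕ)
    (α : (k : Fin K) → Fin (L k) → Fin K → ℝ)
    (r : (k : Fin K) → Fin (L k) → ℝ)
    (π : (k : Fin K) → Equiv.Perm (Fin (L k)))
    (k : Fin K) (m : Fin (L k)) : ℝ :=
  (Finset.univ.filter (fun p : (j : Fin K) × Fin (L j) => p.1 ≠ k)).fold max 0
      (fun p => α k (π k m) p.1 + r p.1 p.2)
    - α k (π k m) k

/-- The effective interference level `γ_k^{[π_k(l_k)]}` of the downlink (IBC) TIN scheme:
`γ = α_{kk}^{[π_k(l_k)]} + max{ max_{l''>l_k} r_k^{[π_k(l'')]},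
max_{m ≥ l_k} ( (max_{(l_j,j): j≠k} (α_{kj}^{[π_k(m)]} + r_j^{[l_j]}))⁺ − α_{kk}^{[π_k(m)]} ) }`,
the two inner maxima being combined over the nonempty index set `{m : m ≥ l_k}`. -/
noncomputable def gam (K : ℕ) (L : Fin K → ℕ)
    (α : (k : Fin K) → Fin (L k) → Fin K → ℝ)
    (r : (k : Fin K) → Fin (L k) → ℝ)
    (π : (k : Fin K) → Equiv.Perm (Fin (L k)))
    (k : Fin K) (lk : Fin (L k)) : ℝ :=
  α k (π k lk) k +
    (Finset.Ici lk).sup' ⟨lk, Finset.mem_Ici.mpr le_rfl⟩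
      (fun m => if lk < m then
          max (r k (π k m)) (interfTerm K L α r π k m)
        else interfTerm K L α r π k m)

/-- equations (85)–(89) in the proof of the duality Lemma 1: for any user
of a cell `j ≠ k` (at decoding position `lj'`, i.e. user `l_j = π_j(lj')`), the interference
level `γ_j^{[l_j]}` reduced by the cross strength `α_{jk}^{[l_j]}` dominates every downlink
power exponent of cell `k`. -/
theorem stmt7 (K : ℕ) (L : Fin K → ℕ)
    (α : (k : Fin K) → Fin (L k) → Fin K → ℝ)
    (r : (k : Fin K) → Fin (L k) → ℝ)
    (π : (k : Fin K) → Equiv.Perm (Fin (L k)))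
    (hα : ∀ k l i, 0 ≤ α k l i)
    (hr : ∀ k l, r k l ≤ 0) :
    ∀ k j : Fin K, j ≠ k → ∀ lj' : Fin (L j), ∀ lk : Fin (L k),
      gam K L α r π j lj' - α j (π j lj') k ≥ r k (π k lk) := by
  intro k j hjk lj' lk
  have hsup : interfTerm K L α r π j lj' ≤
      (Finset.Ici lj').sup' ⟨lj', Finset.mem_Ici.mpr le_rfl⟩
        (fun m => if lj' < m then
            max (r j (π j m)) (interfTerm K L α r π j m)
          else interfTerm K L α r π j m) := by
    have := Finset.le_sup' (f := fun m => if lj' < m then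
            max (r j (π j m)) (interfTerm K L α r π j m)
          else interfTerm K L α r π j m) (Finset.mem_Ici.mpr (le_refl lj'))
    simpa [lt_irrefl] using this
  have hfold : α j (π j lj') k + r k (π k lk) ≤
      (Finset.univ.filter (fun p : (i : Fin K) × Fin (L i) => p.1 ≠ j)).fold max 0
        (fun p => α j (π j lj') p.1 + r p.1 p.2) := by
    rw [Finset.le_fold_max]
    right
    exact ⟨⟨k, π k lk⟩, Finset.mem_filter.mpr ⟨Finset.mem_univ _, hjk.symm⟩, le_rfl⟩
  have h1 : α j (π j lj') k + r k (π k lk) - α j (π j lj') j ≤ interfTerm K L α r π j lj' := by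
    unfold interfTerm; linarith
  unfold gam
  linarith
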